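/- Let (u, w, X) be the solution of Problem (inK) and λ ∈ L²(0,T; H¹(B)^d) the Lagrange multiplier satisfying c(λ(t), z) = δρ (∂w/∂t(t), z)_B + κ(∇_s X(t), ∇_s z)_B for all z ∈ H¹(B)^d. Then there exists a unique p ∈ L²(0,T; L²₀(Ω)) such that (p(t), div v) = ρ_f (d/dt)(u(t), v) + a(u(t), v) + c(λ(t), v∘X̄(t)) for all v ∈ H¹₀(Ω)^d, so that (u, p, X, w, λ) is the unique solution of the full linearized fluid-structure interaction Problem (linI); moreover ‖p‖_{L²(0,T;L²(Ω))} ≤ (1/β)‖ℓ‖_{L²(0,T;H^{-1}(Ω))} where ℓ denotes the right-hand side functional and β the inf-sup constant of the divergence operator on H¹₀(Ω)^d. -/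

import Mathlib

/-!
STATEMENT 12 (Proposition `pr:p`, recovery of the pressure).  Let `(u, w, X)`
be the solution of Problem (inK) and `λ ∈ L²(0,T;H¹(B)^d)` the Lagrange
multiplier, satisfying `c(λ(t), z) = δρ (∂w/∂t(t), z)_B + κ(∇ₛX(t), ∇ₛz)_B`.
Then there exists a unique `p ∈ L²(0,T;L²₀(Ω))` such that
`(p(t), div v) = ρ_f (d/dt)(u(t), v) + a(u(t), v) + c(λ(t), v∘X̄(t))` for all
`v ∈ H¹₀(Ω)^d`, so that `(u, p, X, w, λ)` solves the full linearized Problem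
(linI); moreover `‖p‖_{L²(L²)} ≤ (1/β)‖ℓ‖_{L²(H⁻¹)}`, where `ℓ` is the
right-hand side functional and `β` the inf-sup constant of the divergence.

Abstract setting: `Huo = H¹₀(Ω)^d`, `H = L²(Ω)^d` with embedding `jV`,
`Q = L²₀(Ω)`, `H1B = H¹(B)^d` with inner product the form `c`,
`divOp : Huo → Q` the divergence, with inf-sup constant `β` (expressed by a
`β`-bounded right inverse), `comp t v = v ∘ X̄(t)`; the time derivative
`∂u/∂t ∈ L²(0,T;H⁻¹)` is represented by the functionals `ut t`, and the
first equation of Problem (inK) states that `ℓ(t)` vanishes on the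
divergence-free fields.
-/

open MeasureTheory Set
open scoped ENNReal RealInnerProductSpace

set_option maxHeartbeats 1000000 in
theorem existence_uniqueness_pressure
    (H Huo Q H1B GB : Type)
    [NormedAddCommGroup H] [InnerProductSpace ℝ H] [CompleteSpace H]
    [NormedAddCommGroup Huo] [InnerProductSpace ℝ Huo] [CompleteSpace Huo]
    [NormedAddCommGroup Q] [InnerProductSpace ℝ Q] [CompleteSpace Q]
    [NormedAddCommGroup H1B] [InnerProductSpace ℝ H1B] [CompleteSpace H1B]
    [NormedAddCommGroup GB] [InnerProductSpace ℝ GB] [CompleteSpace GB]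
    (T : ℝ) (hT : 0 < T)
    (ρf δρ κ : ℝ) (hρf : 0 < ρf) (hδρ : 0 ≤ δρ) (hκ : 0 < κ)
    (jV : Huo →L[ℝ] H)
    (a : Huo →L[ℝ] Huo →L[ℝ] ℝ)
    -- the divergence operator and its inf-sup condition with constant β
    (divOp : Huo →L[ℝ] Q) (β : ℝ) (hβ : 0 < β)
    (hinfsup : ∀ q : Q, ∃ v : Huo, divOp v = q ∧ β * ‖v‖ ≤ ‖q‖)
    -- composition with X̄(t) (Assumption 1)
    (comp : ℝ → Huo →L[ℝ] H1B)
    (hcomp : ContDiffOn ℝ 1 comp (Icc 0 T))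
    -- the solution u of Problem (inK), its time derivative ut ∈ L²(0,T;H⁻¹),
    -- and the Lagrange multiplier λ ∈ L²(0,T;H¹(B)^d)
    (u : ℝ → Huo) (ut : ℝ → Huo →L[ℝ] ℝ) (lam : ℝ → H1B)
    (hu : MemLp u 2 (volume.restrict (Ioc 0 T)))
    (hut : MemLp ut 2 (volume.restrict (Ioc 0 T)))
    (hlam : MemLp lam 2 (volume.restrict (Ioc 0 T)))
    (hude : ∀ v : Huo, ∀ᵐ t ∂(volume.restrict (Ioc 0 T)),
      HasDerivAt (fun s => ⟪jV (u s), jV v⟫) (ut t v) t)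
    -- the right-hand side functional ℓ(t)v = ρ_f(d/dt)(u(t),v) + a(u(t),v) + c(λ(t), v∘X̄(t))
    (ℓ : ℝ → Huo →L[ℝ] ℝ)
    (hℓ : ∀ t : ℝ, ∀ v : Huo,
      ℓ t v = ρf * ut t v + a (u t) v + ⟪lam t, comp t v⟫)
    (hℓL2 : MemLp ℓ 2 (volume.restrict (Ioc 0 T)))
    -- first equation of (split): ℓ(t) vanishes on the kernel of the divergence
    (hker : ∀ᵐ t ∂(volume.restrict (Ioc 0 T)),
      ∀ v : Huo, divOp v = 0 → ℓ t v = 0) :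
    ∃ p : ℝ → Q,
      MemLp p 2 (volume.restrict (Ioc 0 T)) ∧
      (∀ᵐ t ∂(volume.restrict (Ioc 0 T)),
        ∀ v : Huo, ⟪p t, divOp v⟫ = ℓ t v) ∧
      -- the L² bound ‖p‖_{L²(0,T;L²)} ≤ (1/β) ‖ℓ‖_{L²(0,T;H⁻¹)}
      eLpNorm p 2 (volume.restrict (Ioc 0 T))
        ≤ ENNReal.ofReal (1 / β) * eLpNorm ℓ 2 (volume.restrict (Ioc 0 T)) ∧
      -- uniqueness
      ∀ p' : ℝ → Q,
        MemLp p' 2 (volume.restrict (Ioc 0 T)) →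
        (∀ᵐ t ∂(volume.restrict (Ioc 0 T)),
          ∀ v : Huo, ⟪p' t, divOp v⟫ = ℓ t v) →
        ∀ᵐ t ∂(volume.restrict (Ioc 0 T)), p' t = p t := by

  classical
  set μ := volume.restrict (Ioc 0 T) with hμ
  set adj := divOp.adjoint with hadjdef
  have hadj_inner : ∀ (q : Q) (v : Huo), ⟪adj q, v⟫ = ⟪q, divOp v⟫ := fun q v =>
    ContinuousLinearMap.adjoint_inner_left divOp v q
  -- lower bound for the adjoint
  have hlow : ∀ q : Q, β * ‖q‖ ≤ ‖adj q‖ := by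
    intro q
    obtain ⟨v, hv1, hv2⟩ := hinfsup q
    have h1 : ‖q‖ * ‖q‖ = ⟪adj q, v⟫ := by
      rw [hadj_inner, hv1, real_inner_self_eq_norm_mul_norm]
    have h2 : ⟪adj q, v⟫ ≤ ‖adj q‖ * ‖v‖ := real_inner_le_norm _ _
    by_cases hq : ‖q‖ = 0
    · have : q = 0 := norm_eq_zero.mp hq
      simp [this]
    · have hqpos : 0 < ‖q‖ := lt_of_le_of_ne (norm_nonneg q) (Ne.symm hq)
      nlinarith [norm_nonneg (adj q), norm_nonneg v]
  -- the coercive bilinear form B q r = ⟪adj q, adj r⟫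
  set B : Q →L[ℝ] Q →L[ℝ] ℝ := (innerSL ℝ).bilinearComp adj adj with hBdef
  have hBapp : ∀ q r : Q, B q r = ⟪adj q, adj r⟫ := fun q r => rfl
  have hcoer : IsCoercive B := by
    refine ⟨β * β, mul_pos hβ hβ, fun q => ?_⟩
    have h1 := hlow q
    have h2 : B q q = ‖adj q‖ * ‖adj q‖ := by
      rw [hBapp, real_inner_self_eq_norm_mul_norm]
    rw [h2]
    nlinarith [mul_le_mul h1 h1 (by positivity) (norm_nonneg (adj q))]
  set E := hcoer.continuousLinearEquivOfBilin with hEdef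
  -- key algebraic fact: divOp ∘ adj ∘ E.symm = id
  have hkey : ∀ f : Q, divOp (adj (E.symm f)) = f := by
    intro f
    apply ext_inner_right ℝ
    intro w
    have h1 : ⟪E (E.symm f), w⟫ = B (E.symm f) w :=
      hcoer.continuousLinearEquivOfBilin_apply (E.symm f) w
    rw [E.apply_symm_apply] at h1
    calc ⟪divOp (adj (E.symm f)), w⟫
        = ⟪w, divOp (adj (E.symm f))⟫ := real_inner_comm _ _
      _ = ⟪adj w, adj (E.symm f)⟫ := (hadj_inner w _).symm
      _ = ⟪adj (E.symm f), adj w⟫ := real_inner_comm _ _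
      _ = B (E.symm f) w := (hBapp _ _).symm
      _ = ⟪f, w⟫ := h1.symm
  -- Riesz representation of ℓ t, and the pressure map
  set R : (Huo →L[ℝ] ℝ) →L[ℝ] Huo :=
    (InnerProductSpace.toDual ℝ Huo).symm.toContinuousLinearEquiv.toContinuousLinearMap
    with hRdef
  have hRapp : ∀ (f : Huo →L[ℝ] ℝ) (v : Huo), ⟪R f, v⟫ = f v := fun f v =>
    InnerProductSpace.toDual_symm_apply
  set Φ : (Huo →L[ℝ] ℝ) →L[ℝ] Q :=
    ((E.symm : Q ≃L[ℝ] Q) : Q →L[ℝ] Q).comp (divOp.comp R) with hΦdef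
  have hΦapp : ∀ f : Huo →L[ℝ] ℝ, Φ f = E.symm (divOp (R f)) := fun f => rfl
  set p : ℝ → Q := fun t => Φ (ℓ t) with hpdef
  -- the defining property holds a.e.
  have hprop : ∀ᵐ t ∂μ, ∀ v : Huo, ⟪p t, divOp v⟫ = ℓ t v := by
    filter_upwards [hker] with t hkt
    intro v
    set g : Huo := R (ℓ t) with hgdef
    have hpt : p t = E.symm (divOp g) := rfl
    have h1 : divOp (adj (p t)) = divOp g := by rw [hpt]; exact hkey (divOp g)
    set h : Huo := adj (p t) - g with hhdef
    have hdiv : divOp h = 0 := by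
      rw [hhdef, map_sub, h1, sub_self]
    have hzero : h = 0 := by
      have hinner : ⟪h, h⟫ = 0 := by
        have e1 : ⟪adj (p t), h⟫ = ⟪p t, divOp h⟫ := hadj_inner _ _
        have e2 : ⟪g, h⟫ = ℓ t h := hRapp _ _
        rw [inner_sub_left, e1, hdiv, inner_zero_right, e2, hkt h hdiv, sub_self]
      exact inner_self_eq_zero.mp hinner
    have hadjp : adj (p t) = g := by
      have := sub_eq_zero.mp hzero
      exact this
    calc ⟪p t, divOp v⟫ = ⟪adj (p t), v⟫ := (hadj_inner _ _).symm
      _ = ⟪g, v⟫ := by rw [hadjp]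
      _ = ℓ t v := hRapp _ _
  -- the pointwise norm bound
  have hbound : ∀ᵐ t ∂μ, ‖p t‖ ≤ ‖((1 / β : ℝ) • ℓ) t‖ := by
    filter_upwards [hprop] with t ht
    obtain ⟨v, hv1, hv2⟩ := hinfsup (p t)
    have h1 : ‖p t‖ * ‖p t‖ = ℓ t v := by
      rw [← ht v, hv1, real_inner_self_eq_norm_mul_norm]
    have h2 : ℓ t v ≤ ‖ℓ t‖ * ‖v‖ := by
      calc ℓ t v ≤ |ℓ t v| := le_abs_self _
        _ = ‖ℓ t v‖ := (Real.norm_eq_abs _).symm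
        _ ≤ ‖ℓ t‖ * ‖v‖ := (ℓ t).le_opNorm v
    have hsm : ‖((1 / β : ℝ) • ℓ) t‖ = (1 / β) * ‖ℓ t‖ := by
      show ‖(1 / β : ℝ) • ℓ t‖ = _
      have hns := norm_smul (1 / β : ℝ) (ℓ t)
      rw [Real.norm_eq_abs, abs_of_pos (one_div_pos.mpr hβ)] at hns
      exact hns
    rw [hsm]
    have hβP : β * ‖p t‖ ≤ ‖ℓ t‖ := by
      by_cases hz : ‖p t‖ = 0
      · rw [hz, mul_zero]; exact norm_nonneg _
      · have hppos : 0 < ‖p t‖ := lt_of_le_of_ne (norm_nonneg _) (Ne.symm hz)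
        nlinarith [norm_nonneg v, norm_nonneg (ℓ t)]
    have hfin : ‖p t‖ ≤ ‖ℓ t‖ / β := (le_div_iff₀ hβ).mpr (by linarith)
    rw [one_div, inv_mul_eq_div]
    exact hfin
  refine ⟨p, Φ.comp_memLp' hℓL2, hprop, ?_, ?_⟩
  · -- the L² bound
    calc eLpNorm p 2 μ ≤ eLpNorm ((1 / β : ℝ) • ℓ) 2 μ := eLpNorm_mono_ae hbound
      _ = ‖(1 / β : ℝ)‖ₑ * eLpNorm ℓ 2 μ := eLpNorm_const_smul (1 / β : ℝ) ℓ 2 μ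
      _ = ENNReal.ofReal (1 / β) * eLpNorm ℓ 2 μ := by
          rw [Real.enorm_eq_ofReal (le_of_lt (one_div_pos.mpr hβ))]
  · -- uniqueness
    intro p' hp'L2 hp'prop
    filter_upwards [hprop, hp'prop] with t h1 h2
    have hall : ∀ v : Huo, ⟪p' t - p t, divOp v⟫ = 0 := by
      intro v
      rw [inner_sub_left, h1 v, h2 v, sub_self]
    obtain ⟨v, hv1, _⟩ := hinfsup (p' t - p t)
    have := hall v
    rw [hv1, inner_self_eq_zero] at this
    exact sub_eq_zero.mp this
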